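/- Let p be an even integer with 2 ≤ p ≤ n and let φ_1,…,φ_n be an 𝔐_p-multiplicative system of random variables with ‖φ_k‖_∞ ≤ 1 for all k. Then for every choice of real coefficients a_1,…,a_n one has ‖∑_{k=1}^n a_k φ_k‖_p ≤ ((p−1)!!)^{1/p} · (∑_{k=1}^n a_k²)^{1/2}, where (p−1)!! = 1·3·5⋯(p−1). -/
import Mathlib

open MeasureTheory Finset

namespace Stmt3

/-- value of a sign bit -/
def rv (b : Bool) : ℝ := if b then 1 else -1

@[simp] lemma rv_true : rv true = 1 := rfl
@[simp] lemma rv_false : rv false = -1 := rfl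

/-- the biased-coin weight of a sign pattern -/
noncomputable def wt {n : ℕ} (x : Fin n → ℝ) (ε : Fin n → Bool) : ℝ :=
  ∏ k, (1 + rv (ε k) * x k) / 2

lemma bool_mom (x : ℝ) (c : ℕ) :
    ∑ b : Bool, (1 + rv b * x) / 2 * rv b ^ c = if Even c then 1 else x := by
  rw [Fintype.sum_bool, rv_true, rv_false]
  rcases Nat.even_or_odd c with h | h
  · rw [if_pos h, h.neg_one_pow, one_pow]; ring
  · rw [if_neg (Nat.not_even_iff_odd.2 h), h.neg_one_pow, one_pow]; ring

lemma wt_mom {n : ℕ} (x : Fin n → ℝ) (c : Fin n → ℕ) :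
    ∑ ε : Fin n → Bool, wt x ε * ∏ k, rv (ε k) ^ c k
      = ∏ k, if Even (c k) then (1:ℝ) else x k := by
  have h1 : ∀ ε : Fin n → Bool, wt x ε * ∏ k, rv (ε k) ^ c k
      = ∏ k, ((1 + rv (ε k) * x k) / 2 * rv (ε k) ^ c k) := by
    intro ε; rw [wt, ← Finset.prod_mul_distrib]
  simp_rw [h1]
  rw [← Fintype.prod_sum fun k b => (1 + rv b * x k) / 2 * rv b ^ c k]
  exact Finset.prod_congr rfl fun k _ => bool_mom (x k) (c k)

lemma wt_sum_one {n : ℕ} (x : Fin n → ℝ) : ∑ ε : Fin n → Bool, wt x ε = 1 := by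
  have := wt_mom x (fun _ => 0)
  simpa using this

lemma wt_nonneg {n : ℕ} (x : Fin n → ℝ) (hx : ∀ k, |x k| ≤ 1) (ε : Fin n → Bool) :
    0 ≤ wt x ε := by
  refine Finset.prod_nonneg fun k _ => ?_
  have h := abs_le.1 (hx k)
  cases hb : ε k <;> simp only [rv_true, rv_false] <;> nlinarith [h.1, h.2]

lemma wt_mean {n : ℕ} (x a : Fin n → ℝ) :
    ∑ ε : Fin n → Bool, wt x ε * (∑ k, a k * rv (ε k)) = ∑ k, a k * x k := by
  simp_rw [Finset.mul_sum]
  rw [Finset.sum_comm]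
  refine Finset.sum_congr rfl fun k _ => ?_
  have h := wt_mom x (fun j => if j = k then 1 else 0)
  have h2 : ∀ ε : Fin n → Bool, ∏ j, rv (ε j) ^ (if j = k then 1 else 0) = rv (ε k) := by
    intro ε
    rw [Finset.prod_congr rfl (fun j _ => pow_ite (j = k) (rv (ε j)) 1 0)]
    simp
  have h3 : (∏ j, if Even (if j = k then 1 else 0) then (1:ℝ) else x j) = x k := by
    rw [Finset.prod_congr rfl (g := fun j => if j = k then x j else 1)
      (fun j _ => by by_cases hj : j = k <;> simp [hj])]
    simp
  simp_rw [h2, h3] at h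
  calc ∑ ε : Fin n → Bool, wt x ε * (a k * rv (ε k))
      = a k * ∑ ε : Fin n → Bool, wt x ε * rv (ε k) := by
        rw [Finset.mul_sum]; exact Finset.sum_congr rfl fun ε _ => by ring
    _ = a k * x k := by rw [h]


/-- number of occurrences of value `k` among positions in `I` -/
def fc {n p : ℕ} (I : Finset (Fin p)) (t : Fin p → Fin n) (k : Fin n) : ℕ :=
  (I.filter fun i => t i = k).card

/-- the set of values occurring an odd number of times -/
def oddSet {n p : ℕ} (t : Fin p → Fin n) : Finset (Fin n) :=
  univ.filter fun k => ¬ Even (fc univ t k)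

lemma jensen {n p : ℕ} (x a : Fin n → ℝ) (hx : ∀ k, |x k| ≤ 1) (hp : Even p) :
    (∑ k, a k * x k) ^ p ≤ ∑ ε : Fin n → Bool, wt x ε * (∑ k, a k * rv (ε k)) ^ p := by
  have hcvx : ConvexOn ℝ Set.univ fun y : ℝ => y ^ p := hp.convexOn_pow
  have h := hcvx.map_sum_le (t := univ) (w := wt x) (p := fun ε => ∑ k, a k * rv (ε k))
      (fun ε _ => wt_nonneg x hx ε) (wt_sum_one x) (fun ε _ => Set.mem_univ _)
  simp only [smul_eq_mul] at h
  rw [wt_mean] at h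
  exact h

lemma expand {n p : ℕ} (x a : Fin n → ℝ) :
    ∑ ε : Fin n → Bool, wt x ε * (∑ k, a k * rv (ε k)) ^ p
      = ∑ t : Fin p → Fin n, (∏ i, a (t i)) * ∏ k ∈ oddSet t, x k := by
  have h1 : ∀ ε : Fin n → Bool, (∑ k, a k * rv (ε k)) ^ p
      = ∑ t : Fin p → Fin n, ∏ i, (a (t i) * rv (ε (t i))) :=
    fun ε => Fintype.sum_pow (fun k => a k * rv (ε k)) p
  simp_rw [h1, Finset.mul_sum]
  rw [Finset.sum_comm]
  refine Finset.sum_congr rfl fun t _ => ?_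
  have h2 : ∀ ε : Fin n → Bool, ∏ i, (a (t i) * rv (ε (t i)))
      = (∏ i, a (t i)) * ∏ k, rv (ε k) ^ fc univ t k := by
    intro ε
    rw [Finset.prod_mul_distrib]
    congr 1
    rw [← Finset.prod_fiberwise_of_maps_to (fun i _ => mem_univ (t i))
      (fun i => rv (ε (t i)))]
    refine Finset.prod_congr rfl fun k _ => ?_
    rw [Finset.prod_congr rfl (fun i hi => by rw [(Finset.mem_filter.1 hi).2]),
      Finset.prod_const]
    rfl
  simp_rw [h2]
  calc ∑ ε : Fin n → Bool, wt x ε * ((∏ i, a (t i)) * ∏ k, rv (ε k) ^ fc univ t k)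
      = (∏ i, a (t i)) * ∑ ε : Fin n → Bool, wt x ε * ∏ k, rv (ε k) ^ fc univ t k := by
        rw [Finset.mul_sum]; exact Finset.sum_congr rfl fun ε _ => by ring
    _ = (∏ i, a (t i)) * ∏ k ∈ oddSet t, x k := by
        rw [wt_mom]
        congr 1
        rw [oddSet, Finset.prod_filter]
        exact Finset.prod_congr rfl fun k _ => (ite_not _ _ _).symm

lemma pointwise {n p : ℕ} (x a : Fin n → ℝ) (hx : ∀ k, |x k| ≤ 1) (hp : Even p) :
    (∑ k, a k * x k) ^ p ≤ ∑ t : Fin p → Fin n, (∏ i, a (t i)) * ∏ k ∈ oddSet t, x k :=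
  (jensen x a hx hp).trans (le_of_eq (expand x a))


/-- tuples taking the default value `d` outside `I` -/
def DI {n p : ℕ} (d : Fin n) (I : Finset (Fin p)) : Finset (Fin p → Fin n) :=
  Fintype.piFinset fun i => if i ∈ I then univ else {d}

/-- tuples in `DI` all of whose fibers within `I` have even cardinality -/
def SE {n p : ℕ} (d : Fin n) (I : Finset (Fin p)) : Finset (Fin p → Fin n) :=
  (DI d I).filter fun t => ∀ k, Even (fc I t k)

lemma prod_nonneg_of_even {n p : ℕ} (a : Fin n → ℝ) (I : Finset (Fin p)) (t : Fin p → Fin n)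
    (ht : ∀ k, Even (fc I t k)) : 0 ≤ ∏ i ∈ I, a (t i) := by
  rw [← Finset.prod_fiberwise_of_maps_to (fun i (_ : i ∈ I) => mem_univ (t i))
    (fun i => a (t i))]
  refine Finset.prod_nonneg fun k _ => ?_
  rw [Finset.prod_congr rfl (fun i hi => by rw [(mem_filter.1 hi).2]), Finset.prod_const]
  exact (ht k).pow_nonneg _

lemma dfac_step : ∀ m : ℕ, (m + 1) * Nat.doubleFactorial (m - 1) ≤ Nat.doubleFactorial (m + 1)
  | 0 => le_refl 1
  | (m + 1) => le_of_eq (Nat.doubleFactorial_add_two m).symm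

lemma count {n p : ℕ} (a : Fin n → ℝ) (s : ℝ) (hs : 0 ≤ s) (hs2 : ∑ k, a k ^ 2 ≤ s ^ 2)
    (d : Fin n) :
    ∀ q : ℕ, ∀ I : Finset (Fin p), I.card = q →
      ∑ t ∈ SE d I, ∏ i ∈ I, a (t i) ≤ ((Nat.doubleFactorial (q - 1) : ℕ) : ℝ) * s ^ q := by
  intro q
  induction q using Nat.strong_induction_on with
  | _ q ih =>
  intro I hI
  rcases Nat.eq_zero_or_pos q with hq0 | hq1
  · -- base case : I = ∅
    subst hq0
    rw [Finset.card_eq_zero] at hI; subst hI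
    have hDI : DI d (∅ : Finset (Fin p)) = {fun _ => d} := by
      rw [DI]
      have : (fun i : Fin p => if i ∈ (∅ : Finset (Fin p)) then (univ : Finset (Fin n))
          else {d}) = fun _ => ({d} : Finset (Fin n)) := by
        funext i; simp
      rw [this, Fintype.piFinset_singleton]
    have hSE : SE d (∅ : Finset (Fin p)) = {fun _ => d} := by
      rw [SE, hDI, Finset.filter_eq_self]
      intro t _ k
      simp [fc]
    rw [hSE]
    simp
  · -- inductive step
    have hne : I.Nonempty := Finset.card_pos.mp (hI ▸ hq1)
    set i₀ := I.min' hne with hi₀def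
    have hi₀I : i₀ ∈ I := I.min'_mem hne
    -- partner function
    have hpartner : ∀ t ∈ SE d I, ((I.filter fun i => t i = t i₀ ∧ i ≠ i₀)).Nonempty := by
      intro t ht
      have heven : Even (fc I t (t i₀)) := ((Finset.mem_filter.1 ht).2) (t i₀)
      have hmem : i₀ ∈ I.filter fun i => t i = t i₀ := Finset.mem_filter.2 ⟨hi₀I, rfl⟩
      have hlt : 1 < (I.filter fun i => t i = t i₀).card := by
        rcases heven with ⟨c, hc⟩
        have h1 : 1 ≤ (I.filter fun i => t i = t i₀).card := Finset.card_pos.2 ⟨i₀, hmem⟩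
        rw [fc] at hc
        omega
      obtain ⟨b, hb, hbne⟩ := Finset.exists_mem_ne hlt i₀
      exact ⟨b, Finset.mem_filter.2 ⟨(Finset.mem_filter.1 hb).1,
        (Finset.mem_filter.1 hb).2, hbne⟩⟩
    set gpt : (Fin p → Fin n) → Fin p := fun t =>
      if h : ((I.filter fun i => t i = t i₀ ∧ i ≠ i₀)).Nonempty then
        ((I.filter fun i => t i = t i₀ ∧ i ≠ i₀)).min' h else i₀ with hgpt
    have hmaps : ∀ t ∈ SE d I, gpt t ∈ I.erase i₀ := by
      intro t ht
      have h := hpartner t ht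
      have : gpt t ∈ I.filter fun i => t i = t i₀ ∧ i ≠ i₀ := by
        rw [hgpt]; simp only [dif_pos h]; exact Finset.min'_mem _ h
      rcases Finset.mem_filter.1 this with ⟨hI', _, hne'⟩
      exact Finset.mem_erase.2 ⟨hne', hI'⟩
    have hfiberprop : ∀ i, ∀ t ∈ (SE d I).filter (fun t => gpt t = i), i ≠ i₀ ∧ i ∈ I ∧
        t i = t i₀ := by
      intro i t ht
      rcases Finset.mem_filter.1 ht with ⟨htSE, hgi⟩
      have h := hpartner t htSE
      have : gpt t ∈ I.filter fun j => t j = t i₀ ∧ j ≠ i₀ := by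
        rw [hgpt]; simp only [dif_pos h]; exact Finset.min'_mem _ h
      rw [hgi] at this
      rcases Finset.mem_filter.1 this with ⟨h1, h2, h3⟩
      exact ⟨h3, h1, h2⟩
    have hpart : ∑ t ∈ SE d I, ∏ j ∈ I, a (t j)
        = ∑ i ∈ I.erase i₀, ∑ t ∈ (SE d I).filter (fun t => gpt t = i), ∏ j ∈ I, a (t j) :=
      (Finset.sum_fiberwise_of_maps_to hmaps _).symm
    have hfiber : ∀ i ∈ I.erase i₀,
        ∑ t ∈ (SE d I).filter (fun t => gpt t = i), ∏ j ∈ I, a (t j)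
          ≤ s ^ 2 * (((Nat.doubleFactorial (q - 2 - 1)) : ℝ) * s ^ (q - 2)) := by
      intro i hi
      rcases Finset.mem_erase.1 hi with ⟨hine, hiI⟩
      set I2 : Finset (Fin p) := (I.erase i₀).erase i with hI2def
      have hi₀notinI2 : i₀ ∉ I2 := fun h =>
        (Finset.notMem_erase i₀ I) (Finset.mem_of_mem_erase h)
      have hinotinI2 : i ∉ I2 := by
        rw [hI2def]; exact Finset.notMem_erase i (I.erase i₀)
      have hi₀notin : i₀ ∉ insert i I2 := by
        intro h
        rcases Finset.mem_insert.1 h with h | h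
        · exact hine h.symm
        · exact hi₀notinI2 h
      have hIdec : I = insert i₀ (insert i I2) := by
        rw [hI2def, Finset.insert_erase hi, Finset.insert_erase hi₀I]
      have hI2card : I2.card = q - 2 := by
        rw [hI2def, Finset.card_erase_of_mem hi, Finset.card_erase_of_mem hi₀I, hI]
        omega
      have hq2 : 2 ≤ q := by
        have h1 : 0 < (I.erase i₀).card := Finset.card_pos.2 ⟨i, hi⟩
        rw [Finset.card_erase_of_mem hi₀I, hI] at h1
        omega
      -- the injection
      set Φ : (Fin p → Fin n) → Fin n × (Fin p → Fin n) :=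
        fun t => (t i₀, Function.update (Function.update t i₀ d) i d) with hΦdef
      set F : Fin n × (Fin p → Fin n) → ℝ := fun z => a z.1 ^ 2 * ∏ j ∈ I2, a (z.2 j)
        with hFdef
      have hagree : ∀ t : Fin p → Fin n, ∀ j ∈ I2,
          Function.update (Function.update t i₀ d) i d j = t j := by
        intro t j hj
        have hji : j ≠ i := fun h => hinotinI2 (h ▸ hj)
        have hji₀ : j ≠ i₀ := fun h => hi₀notinI2 (h ▸ hj)
        rw [Function.update_of_ne hji, Function.update_of_ne hji₀]
      have hw : ∀ t ∈ (SE d I).filter (fun t => gpt t = i), ∏ j ∈ I, a (t j) = F (Φ t) := by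
        intro t ht
        have hti : t i = t i₀ := (hfiberprop i t ht).2.2
        rw [hIdec, Finset.prod_insert hi₀notin, Finset.prod_insert hinotinI2, hti, hFdef,
          hΦdef]
        simp only
        rw [Finset.prod_congr rfl (fun j hj => (congrArg a (hagree t j hj)).symm)]
        ring
      have hΦmem : ∀ t ∈ (SE d I).filter (fun t => gpt t = i),
          Φ t ∈ (univ : Finset (Fin n)) ×ˢ SE d I2 := by
        intro t ht
        rcases Finset.mem_filter.1 ht with ⟨htSE, _⟩
        rcases Finset.mem_filter.1 htSE with ⟨htDI, hteven⟩
        have hti : t i = t i₀ := (hfiberprop i t ht).2.2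
        refine Finset.mem_product.2 ⟨Finset.mem_univ _, Finset.mem_filter.2 ⟨?_, ?_⟩⟩
        · -- (Φ t).2 ∈ DI d I2
          rw [DI, Fintype.mem_piFinset]
          intro j
          by_cases hj : j ∈ I2
          · rw [if_pos hj]; exact Finset.mem_univ _
          · rw [if_neg hj, Finset.mem_singleton]
            by_cases hji : j = i
            · subst hji; rw [hΦdef]; simp
            · rw [hΦdef]
              simp only
              rw [Function.update_of_ne hji]
              by_cases hji₀ : j = i₀
              · subst hji₀; rw [Function.update_self]
              · rw [Function.update_of_ne hji₀]
                have hjI : j ∉ I := by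
                  rw [hIdec]
                  intro h
                  rcases Finset.mem_insert.1 h with h | h
                  · exact hji₀ h
                  rcases Finset.mem_insert.1 h with h | h
                  · exact hji h
                  · exact hj h
                have := Fintype.mem_piFinset.1 htDI j
                rwa [if_neg hjI, Finset.mem_singleton] at this
        · -- evenness for I2
          intro k
          have hfc2 : fc I2 (Function.update (Function.update t i₀ d) i d) k
              = fc I2 t k := by
            simp only [fc]
            congr 1
            exact Finset.filter_congr (fun j hj => by rw [hagree t j hj])
          have hns1 : i ∉ I2.filter fun j => t j = k :=
            fun h => hinotinI2 (Finset.mem_of_mem_filter i h)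
          have hns0 : i₀ ∉ insert i (I2.filter fun j => t j = k) := by
            intro h
            rcases Finset.mem_insert.1 h with h | h
            · exact hine h.symm
            · exact hi₀notinI2 (Finset.mem_of_mem_filter i₀ h)
          have hrel : fc I t k = fc I2 t k + (if t i₀ = k then 2 else 0) := by
            simp only [fc]
            rw [hIdec, Finset.filter_insert, Finset.filter_insert]
            by_cases h0 : t i₀ = k
            · rw [if_pos h0, if_pos (hti.trans h0), if_pos h0,
                Finset.card_insert_of_notMem hns0, Finset.card_insert_of_notMem hns1]
            · rw [if_neg h0, if_neg (fun h => h0 (hti.symm.trans h)), if_neg h0]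
              omega
          have hev := hteven k
          rw [hrel] at hev
          show Even (fc I2 (Function.update (Function.update t i₀ d) i d) k)
          rw [hfc2, Nat.even_iff]
          rw [Nat.even_iff] at hev
          by_cases h0 : t i₀ = k
          · rw [if_pos h0] at hev; omega
          · rw [if_neg h0] at hev; omega
      have hinj : ∀ t1 ∈ (SE d I).filter (fun t => gpt t = i),
          ∀ t2 ∈ (SE d I).filter (fun t => gpt t = i), Φ t1 = Φ t2 → t1 = t2 := by
        intro t1 ht1 t2 ht2 h
        have h1 : t1 i₀ = t2 i₀ := congrArg Prod.fst h
        have h2 : (Φ t1).2 = (Φ t2).2 := congrArg Prod.snd h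
        funext j
        by_cases hji₀ : j = i₀
        · subst hji₀; exact h1
        by_cases hji : j = i
        · subst hji
          rw [(hfiberprop j t1 ht1).2.2, (hfiberprop j t2 ht2).2.2, h1]
        · have e1 := congrFun h2 j
          rw [hΦdef] at e1
          simp only [Function.update_of_ne hji, Function.update_of_ne hji₀] at e1
          exact e1
      have hFnn : ∀ z ∈ (univ : Finset (Fin n)) ×ˢ SE d I2, 0 ≤ F z := by
        intro z hz
        rcases Finset.mem_product.1 hz with ⟨_, hz2⟩
        have := prod_nonneg_of_even a I2 z.2 ((Finset.mem_filter.1 hz2).2)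
        rw [hFdef]
        positivity
      have hN2 : (0:ℝ) ≤ ∑ u ∈ SE d I2, ∏ j ∈ I2, a (u j) :=
        Finset.sum_nonneg fun u hu =>
          prod_nonneg_of_even a I2 u ((Finset.mem_filter.1 hu).2)
      calc ∑ t ∈ (SE d I).filter (fun t => gpt t = i), ∏ j ∈ I, a (t j)
          = ∑ t ∈ (SE d I).filter (fun t => gpt t = i), F (Φ t) :=
            Finset.sum_congr rfl hw
        _ = ∑ z ∈ ((SE d I).filter (fun t => gpt t = i)).image Φ, F z :=
            (Finset.sum_image hinj).symm
        _ ≤ ∑ z ∈ (univ : Finset (Fin n)) ×ˢ SE d I2, F z :=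
            Finset.sum_le_sum_of_subset_of_nonneg
              (Finset.image_subset_iff.2 hΦmem) (fun z hz _ => hFnn z hz)
        _ = (∑ k, a k ^ 2) * ∑ u ∈ SE d I2, ∏ j ∈ I2, a (u j) := by
            rw [Finset.sum_product, Finset.sum_mul_sum]
        _ ≤ s ^ 2 * (((Nat.doubleFactorial (q - 2 - 1)) : ℝ) * s ^ (q - 2)) := by
            refine mul_le_mul hs2 (ih (q - 2) (by omega) I2 hI2card) hN2 (by positivity)
    rw [hpart]
    calc ∑ i ∈ I.erase i₀, ∑ t ∈ (SE d I).filter (fun t => gpt t = i), ∏ j ∈ I, a (t j)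
        ≤ ∑ _i ∈ I.erase i₀, s ^ 2 * (((Nat.doubleFactorial (q - 2 - 1)) : ℝ) * s ^ (q - 2)) :=
          Finset.sum_le_sum hfiber
      _ = ((q - 1 : ℕ) : ℝ) * (s ^ 2 * (((Nat.doubleFactorial (q - 2 - 1)) : ℝ) * s ^ (q - 2))) := by
          rw [Finset.sum_const, Finset.card_erase_of_mem hi₀I, hI, nsmul_eq_mul]
      _ ≤ ((Nat.doubleFactorial (q - 1) : ℕ) : ℝ) * s ^ q := by
          rcases Nat.lt_or_ge q 2 with h2 | h2
          · have hq1' : q = 1 := by omega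
            subst hq1'
            have h0 : ((1 - 1 : ℕ) : ℝ) = 0 := by norm_num
            rw [h0, zero_mul]
            positivity
          · obtain ⟨Q, rfl⟩ : ∃ Q, q = Q + 2 := ⟨q - 2, by omega⟩
            have harr : Q + 2 - 1 = Q + 1 := rfl
            have harr2 : Q + 2 - 2 = Q := rfl
            rw [harr, harr2]
            have hpow : s ^ 2 * s ^ Q = s ^ (Q + 2) := by rw [← pow_add]; ring_nf
            calc ((Q + 1 : ℕ) : ℝ) * (s ^ 2 * ((Nat.doubleFactorial (Q - 1) : ℝ) * s ^ Q))
                = (((Q + 1) * Nat.doubleFactorial (Q - 1) : ℕ) : ℝ) * (s ^ 2 * s ^ Q) := by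
                  push_cast; ring
              _ = (((Q + 1) * Nat.doubleFactorial (Q - 1) : ℕ) : ℝ) * s ^ (Q + 2) := by rw [hpow]
              _ ≤ ((Nat.doubleFactorial (Q + 1) : ℕ) : ℝ) * s ^ (Q + 2) := by
                  refine mul_le_mul_of_nonneg_right ?_ (by positivity)
                  exact_mod_cast dfac_step Q


end Stmt3

open Stmt3

theorem stmt_3 {Ω : Type*} [MeasurableSpace Ω] (P : Measure Ω) [IsProbabilityMeasure P]
    (n p : ℕ) (hp2 : 2 ≤ p) (hpn : p ≤ n) (hpeven : Even p)
    (φ : Fin n → Ω → ℝ) (hφm : ∀ k, Measurable (φ k))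
    (hφb : ∀ k, ∀ᵐ ω ∂P, |φ k ω| ≤ 1)
    (hmult : ∀ S : Finset (Fin n), S.Nonempty → S.card ≤ p →
      ∫ ω, ∏ j ∈ S, φ j ω ∂P = 0)
    (a : Fin n → ℝ) :
    (∫ ω, |∑ k, a k * φ k ω| ^ (p : ℝ) ∂P) ^ (1 / (p : ℝ)) ≤
      ((Nat.doubleFactorial (p - 1) : ℕ) : ℝ) ^ (1 / (p : ℝ)) * Real.sqrt (∑ k, (a k) ^ 2) := by
  classical
  have hn0 : 0 < n := lt_of_lt_of_le (lt_of_lt_of_le two_pos hp2) hpn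
  set d : Fin n := ⟨0, hn0⟩ with hddef
  set f : Ω → ℝ := fun ω => ∑ k, a k * φ k ω with hfdef
  set s : ℝ := Real.sqrt (∑ k, (a k) ^ 2) with hsdef
  have hs0 : 0 ≤ s := Real.sqrt_nonneg _
  have hs2 : ∑ k, (a k) ^ 2 ≤ s ^ 2 :=
    le_of_eq (Real.sq_sqrt (Finset.sum_nonneg fun k _ => sq_nonneg _)).symm
  have hfm : Measurable f := by
    apply Finset.measurable_sum
    intro k _
    exact (hφm k).const_mul (a k)
  have hae : ∀ᵐ ω ∂P, ∀ k, |φ k ω| ≤ 1 := (ae_all_iff).2 hφb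
  have hint1 : ∀ t : Fin p → Fin n, Integrable (fun ω => ∏ k ∈ oddSet t, φ k ω) P := by
    intro t
    have hm : Measurable fun ω => ∏ k ∈ oddSet t, φ k ω :=
      Finset.measurable_prod _ (fun k _ => hφm k)
    refine (integrable_const (1:ℝ)).mono' hm.aestronglyMeasurable ?_
    filter_upwards [hae] with ω hω
    rw [Real.norm_eq_abs, Finset.abs_prod]
    exact Finset.prod_le_one (fun k _ => abs_nonneg _) (fun k _ => hω k)
  have hint2 : ∀ t : Fin p → Fin n,
      Integrable (fun ω => (∏ i, a (t i)) * ∏ k ∈ oddSet t, φ k ω) P :=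
    fun t => (hint1 t).const_mul _
  have hintG : Integrable
      (fun ω => ∑ t : Fin p → Fin n, (∏ i, a (t i)) * ∏ k ∈ oddSet t, φ k ω) P :=
    integrable_finset_sum _ (fun t _ => hint2 t)
  have hintf : Integrable (fun ω => f ω ^ p) P := by
    refine (integrable_const ((∑ k, |a k|) ^ p)).mono'
      ((hfm.pow_const p).aestronglyMeasurable) ?_
    filter_upwards [hae] with ω hω
    rw [Real.norm_eq_abs, abs_pow]
    refine pow_le_pow_left₀ (abs_nonneg _) ?_ p
    calc |f ω| ≤ ∑ k, |a k * φ k ω| := Finset.abs_sum_le_sum_abs _ _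
      _ ≤ ∑ k, |a k| := Finset.sum_le_sum fun k _ => by
          rw [abs_mul]
          calc |a k| * |φ k ω| ≤ |a k| * 1 :=
                mul_le_mul_of_nonneg_left (hω k) (abs_nonneg _)
            _ = |a k| := mul_one _
  have hptwise : ∀ᵐ ω ∂P, f ω ^ p
      ≤ ∑ t : Fin p → Fin n, (∏ i, a (t i)) * ∏ k ∈ oddSet t, φ k ω := by
    filter_upwards [hae] with ω hω
    exact pointwise (fun k => φ k ω) a hω hpeven
  have hval : ∫ ω, (∑ t : Fin p → Fin n, (∏ i, a (t i)) * ∏ k ∈ oddSet t, φ k ω) ∂P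
      = ∑ t ∈ Finset.univ.filter (fun t : Fin p → Fin n => oddSet t = ∅), ∏ i, a (t i) := by
    rw [integral_finset_sum _ (fun t _ => hint2 t)]
    have hterm : ∀ t : Fin p → Fin n, ∫ ω, (∏ i, a (t i)) * ∏ k ∈ oddSet t, φ k ω ∂P
        = if oddSet t = ∅ then ∏ i, a (t i) else 0 := by
      intro t
      rw [integral_const_mul]
      by_cases h : oddSet t = ∅
      · rw [if_pos h, h]
        simp
      · rw [if_neg h]
        have hne : (oddSet t).Nonempty := Finset.nonempty_of_ne_empty h
        have hcard : (oddSet t).card ≤ p := by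
          have hsub : oddSet t ⊆ Finset.univ.image t := by
            intro k hk
            rcases Finset.mem_filter.1 hk with ⟨_, hodd⟩
            have h1 : fc Finset.univ t k ≠ 0 := fun h0 => hodd (h0 ▸ Even.zero)
            have h2 : (Finset.univ.filter fun i => t i = k).Nonempty := by
              rw [Finset.nonempty_iff_ne_empty]
              intro h0
              exact h1 (by rw [fc, h0, Finset.card_empty])
            rcases h2 with ⟨i, hi⟩
            exact Finset.mem_image.2 ⟨i, Finset.mem_univ i, (Finset.mem_filter.1 hi).2⟩
          calc (oddSet t).card ≤ (Finset.univ.image t).card := Finset.card_le_card hsub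
            _ ≤ (Finset.univ : Finset (Fin p)).card := Finset.card_image_le
            _ = p := by simp
        rw [hmult _ hne hcard, mul_zero]
    simp_rw [hterm]
    rw [← Finset.sum_filter]
  have hSEuniv : Finset.univ.filter (fun t : Fin p → Fin n => oddSet t = ∅)
      = SE d Finset.univ := by
    rw [SE]
    have hDI : DI d (Finset.univ : Finset (Fin p)) = Finset.univ := by
      rw [DI]
      have h1 : (fun i : Fin p => if i ∈ (Finset.univ : Finset (Fin p)) then
          (Finset.univ : Finset (Fin n)) else {d}) = fun _ => (Finset.univ : Finset (Fin n)) := by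
        funext i; rw [if_pos (Finset.mem_univ i)]
      rw [h1, Fintype.piFinset_univ]
    rw [hDI]
    refine Finset.filter_congr fun t _ => ?_
    rw [oddSet]
    constructor
    · intro h k
      by_contra hk
      have hmem : k ∈ Finset.univ.filter fun k => ¬ Even (fc Finset.univ t k) :=
        Finset.mem_filter.2 ⟨Finset.mem_univ _, hk⟩
      rw [h] at hmem
      exact absurd hmem (Finset.notMem_empty k)
    · intro h
      rw [Finset.filter_eq_empty_iff]
      exact fun k _ => not_not_intro (h k)
  have hcount := count a s hs0 hs2 d (Finset.univ : Finset (Fin p)).card Finset.univ rfl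
  have hcardp : (Finset.univ : Finset (Fin p)).card = p := by simp
  rw [hcardp] at hcount
  have hkey : ∫ ω, f ω ^ p ∂P ≤ ((Nat.doubleFactorial (p - 1) : ℕ) : ℝ) * s ^ p := by
    calc ∫ ω, f ω ^ p ∂P
        ≤ ∫ ω, (∑ t : Fin p → Fin n, (∏ i, a (t i)) * ∏ k ∈ oddSet t, φ k ω) ∂P :=
          integral_mono_ae hintf hintG hptwise
      _ = ∑ t ∈ Finset.univ.filter (fun t : Fin p → Fin n => oddSet t = ∅), ∏ i, a (t i) :=
          hval
      _ = ∑ t ∈ SE d Finset.univ, ∏ i ∈ Finset.univ, a (t i) := by rw [hSEuniv]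
      _ ≤ ((Nat.doubleFactorial (p - 1) : ℕ) : ℝ) * s ^ p := hcount
  have hgoal1 : (fun ω => |f ω| ^ (p:ℝ)) = fun ω => f ω ^ p := by
    funext ω
    rw [Real.rpow_natCast, hpeven.pow_abs]
  have hnn : 0 ≤ ∫ ω, f ω ^ p ∂P :=
    integral_nonneg fun ω => hpeven.pow_nonneg (f ω)
  have hpne : (p:ℝ) ≠ 0 := Nat.cast_ne_zero.2 (by omega)
  calc (∫ ω, |f ω| ^ (p:ℝ) ∂P) ^ (1/(p:ℝ))
      = (∫ ω, f ω ^ p ∂P) ^ (1/(p:ℝ)) := by rw [hgoal1]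
    _ ≤ (((Nat.doubleFactorial (p - 1) : ℕ) : ℝ) * s ^ p) ^ (1/(p:ℝ)) := Real.rpow_le_rpow hnn hkey (by positivity)
    _ = ((Nat.doubleFactorial (p - 1) : ℕ) : ℝ) ^ (1/(p:ℝ)) * s := by
        rw [Real.mul_rpow (by positivity) (by positivity)]
        congr 1
        rw [← Real.rpow_natCast s p, ← Real.rpow_mul hs0, mul_one_div, div_self hpne,
          Real.rpow_one]
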